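/- Let α be a well-ordered set, (X, d) a metric space over lexicographically ordered ℝ^α, and δ the ℤ^α-valued metric defined by δ(x,y) = r^{n(x,y)} for x ≠ y (where n(x,y) is the least coordinate at which d(x,y) is nonzero) and δ(x,x) = 0. Then d and δ induce the same topology on X: for every x ∈ X and every λ ∈ α, B_δ(x, r^λ) ⊇ B_d(x, r^{λ+1}) and B_d(x, r^λ) ⊇ B_δ(x, r^{λ+1}), where λ+1 denotes the successor of λ. -/

import Mathlib

/-- A metric on `X` with values in a linearly ordered abelian group `G`. -/
structure IsGMetric {X G : Type*} [AddCommGroup G] [LinearOrder G] [IsOrderedAddMonoid G] (d : X → X → G) : Prop where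
  nonneg : ∀ x y, 0 ≤ d x y
  eq_zero_iff : ∀ x y, d x y = 0 ↔ x = y
  symm : ∀ x y, d x y = d y x
  triangle : ∀ x y z, d x y ≤ d x z + d z y

/-- The element `r^l` of `Lex (ι → R)`: indicator of the coordinate `l`. -/
def unitVec {ι R : Type*} [DecidableEq ι] [Zero R] [One R] (l : ι) : Lex (ι → R) :=
  toLex fun m => if m = l then 1 else 0

/-- The open ball of a `G`-valued metric. -/
def gball {X G : Type*} [LT G] (d : X → X → G) (x : X) (g : G) : Set X := {y | d x y < g}

section Aux

variable {ι : Type*} [LinearOrder ι] {R : Type*} [Semiring R] [PartialOrder R] [IsStrictOrderedRing R]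

lemma lex_lt_of {f g : Lex (ι → R)} (i : ι)
    (h1 : ∀ j, j < i → ofLex f j = ofLex g j) (h2 : ofLex f i < ofLex g i) : f < g :=
  ⟨i, h1, h2⟩

lemma lex_lt_dest {f g : Lex (ι → R)} (h : f < g) :
    ∃ i, (∀ j, j < i → ofLex f j = ofLex g j) ∧ ofLex f i < ofLex g i := h

lemma ofLex_unitVec (l m : ι) :
    ofLex (unitVec l : Lex (ι → R)) m = if m = l then 1 else 0 := rfl

lemma aux_zero_lt_unitVec (l : ι) : (0 : Lex (ι → R)) < unitVec l := by
  refine lex_lt_of l (fun j hj => ?_) ?_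
  · show (0 : R) = if j = l then 1 else 0
    simp [hj.ne]
  · show (0 : R) < if l = l then 1 else 0
    simp [zero_lt_one]

lemma aux_unitVec_lt {l k : ι} (h : l < k) : (unitVec k : Lex (ι → R)) < unitVec l := by
  refine lex_lt_of l (fun j hj => ?_) ?_
  · show (if j = k then (1:R) else 0) = if j = l then 1 else 0
    simp [hj.ne, (hj.trans h).ne]
  · show (if l = k then (1:R) else 0) < if l = l then 1 else 0
    simp [h.ne, zero_lt_one]

end Aux

/-- With `d` a metric over lexicographic `ℝ^α`, `n x y` the least coordinate
at which `d x y` is nonzero, and `δ` the associated `ℤ^α`-valued metric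
(`δ x y = r^{n x y}` for `x ≠ y`, `δ x x = 0`), the metrics `d` and `δ` have mutually
nested balls: `B_d(x, r^{l+1}) ⊆ B_δ(x, r^l)` and `B_δ(x, r^{l+1}) ⊆ B_d(x, r^l)`,
where `l+1` is the order successor of `l` (every element of `α` is assumed to have a
successor). Hence they induce the same topology. -/
theorem stmt10 {α X : Type*} [LinearOrder α] [WellFoundedLT α] [SuccOrder α] [NoMaxOrder α]
    (d : X → X → Lex (α → ℝ)) (hd : IsGMetric d)
    (n : X → X → α)
    (hn : ∀ x y, x ≠ y →
      ofLex (d x y) (n x y) ≠ 0 ∧ ∀ m, m < n x y → ofLex (d x y) m = 0)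
    (δ : X → X → Lex (α → ℤ)) (hδ0 : ∀ x, δ x x = 0)
    (hδ : ∀ x y, x ≠ y → δ x y = unitVec (n x y)) :
    ∀ (x : X) (l : α),
      gball d x (unitVec (Order.succ l)) ⊆ gball δ x (unitVec l) ∧
      gball δ x (unitVec (Order.succ l)) ⊆ gball d x (unitVec l) := by
  intro x l
  have hls : l < Order.succ l := Order.lt_succ l
  constructor
  · intro y hy
    by_cases hxy : x = y
    · subst hxy
      show δ x x < unitVec l
      rw [hδ0]
      exact aux_zero_lt_unitVec l
    · obtain ⟨hne, hlt⟩ := hn x y hxy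
      -- d x y (n x y) > 0
      have hpos : 0 < d x y :=
        lt_of_le_of_ne (hd.nonneg x y) (fun h => hxy ((hd.eq_zero_iff x y).1 h.symm))
      obtain ⟨i, hi1, hi2⟩ := lex_lt_dest hpos
      have hin : i = n x y := by
        rcases lt_trichotomy i (n x y) with h | h | h
        · exact absurd (hlt i h) (by rw [ofLex_zero, Pi.zero_apply] at hi2; simpa using hi2.ne')
        · exact h
        · exact absurd ((hi1 _ h).symm) hne
      have hdn : (0 : ℝ) < ofLex (d x y) (n x y) := by
        rw [ofLex_zero, Pi.zero_apply] at hi2; simpa [hin] using hi2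
      -- show l < n x y
      have hln : l < n x y := by
        by_contra hc
        push_neg at hc
        have hnsl : n x y < Order.succ l := lt_of_le_of_lt hc hls
        obtain ⟨i, hi1, hi2⟩ := lex_lt_dest (hy : d x y < unitVec (Order.succ l))
        rcases lt_trichotomy i (n x y) with h | h | h
        · rw [hlt i h, ofLex_unitVec, if_neg (h.trans hnsl).ne] at hi2
          exact lt_irrefl _ hi2
        · subst h
          rw [ofLex_unitVec, if_neg hnsl.ne] at hi2
          exact absurd hi2 (not_lt.2 hdn.le)
        · have := hi1 _ h
          rw [ofLex_unitVec, if_neg hnsl.ne] at this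
          exact hne this
      show δ x y < unitVec l
      rw [hδ x y hxy]
      exact aux_unitVec_lt hln
  · intro y hy
    by_cases hxy : x = y
    · subst hxy
      show d x x < unitVec l
      rw [(hd.eq_zero_iff x x).2 rfl]
      exact aux_zero_lt_unitVec l
    · obtain ⟨hne, hlt⟩ := hn x y hxy
      have hy' : (unitVec (n x y) : Lex (α → ℤ)) < unitVec (Order.succ l) := by
        rw [← hδ x y hxy]; exact hy
      have hsn : Order.succ l < n x y := by
        rcases lt_trichotomy (Order.succ l) (n x y) with h | h | h
        · exact h
        · rw [h] at hy'; exact absurd hy' (lt_irrefl _)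
        · exact absurd hy' (asymm (aux_unitVec_lt h))
      have hln : l < n x y := hls.trans hsn
      show d x y < unitVec l
      refine lex_lt_of l (fun j hj => ?_) ?_
      · rw [hlt j (hj.trans hln), ofLex_unitVec, if_neg hj.ne]
      · rw [hlt l hln, ofLex_unitVec, if_pos rfl]
        exact zero_lt_one
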